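/- For β > 0 and f(x) = x·(2^(β/x) − 1), the quantity (f'(x))² − f(x)·f''(x) is ≤ 0 for all x > 0; consequently the function g₁(x) = f(x)/f'(x) is non-increasing on (0, ∞). -/

import Mathlib

open Real Set

private lemma sinh_le_mul_cosh2 {v : ℝ} (hv : 0 ≤ v) : Real.sinh v ≤ v * Real.cosh v := by
  have h : MonotoneOn (fun t : ℝ => t * Real.cosh t - Real.sinh t) (Set.Ici 0) := by
    apply monotoneOn_of_deriv_nonneg (convex_Ici 0)
    · exact ((continuous_id.mul Real.continuous_cosh).sub Real.continuous_sinh).continuousOn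
    · intro t _
      exact ((differentiableAt_id.mul (Real.differentiable_cosh t)).sub
        (Real.differentiable_sinh t)).differentiableWithinAt
    · intro t ht
      rw [interior_Ici] at ht
      have ht' : (0:ℝ) < t := ht
      have hd : HasDerivAt (fun t : ℝ => t * Real.cosh t - Real.sinh t)
          (1 * Real.cosh t + t * Real.sinh t - Real.cosh t) t :=
        ((hasDerivAt_id t).mul (Real.hasDerivAt_cosh t)).sub (Real.hasDerivAt_sinh t)
      rw [hd.deriv]
      have hs : (0:ℝ) < Real.sinh t := by rwa [Real.sinh_pos_iff]
      nlinarith [mul_pos ht' hs]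
  have h0 := h (by simp : (0:ℝ) ∈ Set.Ici (0:ℝ)) (by exact hv) hv
  simp at h0
  linarith

private lemma key_ineq2 {u : ℝ} (hu : 0 < u) :
    (Real.exp u - 1 - u * Real.exp u) ^ 2 ≤ u ^ 2 * Real.exp u * (Real.exp u - 1) := by
  have hv : 0 < u / 2 := by linarith
  set v := u / 2 with hvdef
  set B := Real.exp v with hBdef
  have hBpos : 0 < B := Real.exp_pos v
  have hB1 : 1 ≤ B := Real.one_le_exp hv.le
  have hE : Real.exp u = B ^ 2 := by
    rw [pow_two, ← Real.exp_add]; congr 1; rw [hvdef]; ring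
  have hsinh : Real.sinh v = (B - B⁻¹) / 2 := by
    rw [Real.sinh_eq, Real.exp_neg]
  have hcosh : Real.cosh v = (B + B⁻¹) / 2 := by
    rw [Real.cosh_eq, Real.exp_neg]
  -- fact 1 : v * B ≤ (B^2 - 1)/2
  have f1 : v * B ≤ (B ^ 2 - 1) / 2 := by
    have h1 := (Real.self_lt_sinh_iff.mpr hv).le
    rw [hsinh] at h1
    have h2 := mul_le_mul_of_nonneg_right h1 hBpos.le
    have e1 : (B - B⁻¹) / 2 * B = (B ^ 2 - 1) / 2 := by
      field_simp
    linarith [e1 ▸ h2]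
  -- fact 2 : B^2 - 1 ≤ v * (B^2 + 1)
  have f2 : B ^ 2 - 1 ≤ v * (B ^ 2 + 1) := by
    have h1 := sinh_le_mul_cosh2 hv.le
    rw [hsinh, hcosh] at h1
    have h2 := mul_le_mul_of_nonneg_right h1 hBpos.le
    have e1 : (B - B⁻¹) / 2 * B = (B ^ 2 - 1) / 2 := by field_simp
    have e2 : v * ((B + B⁻¹) / 2) * B = v * (B ^ 2 + 1) / 2 := by field_simp
    rw [e1, e2] at h2
    linarith
  have hs : (0:ℝ) ≤ B ^ 2 - 1 := by nlinarith
  have huv : u = 2 * v := by rw [hvdef]; ring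
  have p1 : 4 * v * B * (v * B) ≤ 4 * v * B * ((B ^ 2 - 1) / 2) :=
    mul_le_mul_of_nonneg_left f1 (by positivity)
  have p2 : (B ^ 2 - 1) * (B ^ 2 - 1) ≤ (B ^ 2 - 1) * (v * (B ^ 2 + 1)) :=
    mul_le_mul_of_nonneg_left f2 hs
  have p3 : (B ^ 2 - 1) * v * ((B + 1) ^ 2) ≤ (B ^ 2 - 1) * v * (4 * B ^ 2) :=
    mul_le_mul_of_nonneg_left (by nlinarith [sq_nonneg (B - 1)]) (mul_nonneg hs hv.le)
  rw [hE, huv]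
  nlinarith [p1, p2, p3]

private lemma hasDerivAt_F2 (β : ℝ) {x : ℝ} (hx : x ≠ 0) :
    HasDerivAt (fun x : ℝ => x * (Real.exp (Real.log 2 * (β / x)) - 1))
      (Real.exp (Real.log 2 * (β / x)) - 1
        - Real.log 2 * (β / x) * Real.exp (Real.log 2 * (β / x))) x := by
  have h1 : HasDerivAt (fun x : ℝ => β / x) (-(β / x ^ 2)) x := by
    simpa [div_eq_mul_inv] using ((hasDerivAt_inv hx).const_mul β)
  have h2 := (h1.const_mul (Real.log 2)).exp
  have h5 : HasDerivAt (fun x : ℝ => x * (Real.exp (Real.log 2 * (β / x)) - 1)) _ x :=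
    (hasDerivAt_id' x).mul (h2.sub_const 1)
  convert h5 using 1
  field_simp
  ring

private lemma hasDerivAt_G2 (β : ℝ) {x : ℝ} (hx : x ≠ 0) :
    HasDerivAt (fun x : ℝ => Real.exp (Real.log 2 * (β / x)) - 1
        - Real.log 2 * (β / x) * Real.exp (Real.log 2 * (β / x)))
      ((Real.log 2 * β) ^ 2 / x ^ 3 * Real.exp (Real.log 2 * (β / x))) x := by
  have h1 : HasDerivAt (fun x : ℝ => β / x) (-(β / x ^ 2)) x := by
    simpa [div_eq_mul_inv] using ((hasDerivAt_inv hx).const_mul β)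
  have h2 := (h1.const_mul (Real.log 2)).exp
  have h3 : HasDerivAt (fun x : ℝ => Real.log 2 * (β / x) * Real.exp (Real.log 2 * (β / x))) _ x :=
    (h1.const_mul (Real.log 2)).mul h2
  have h4 : HasDerivAt (fun x : ℝ => Real.exp (Real.log 2 * (β / x)) - 1
      - Real.log 2 * (β / x) * Real.exp (Real.log 2 * (β / x))) _ x :=
    (h2.sub_const 1).sub h3
  convert h4 using 1
  field_simp
  ring

theorem f_ratio_antitone (β : ℝ) (hβ : 0 < β) :
    (∀ x : ℝ, 0 < x →
      (deriv (fun x : ℝ => x * ((2 : ℝ) ^ (β / x) - 1)) x) ^ 2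
        - (x * ((2 : ℝ) ^ (β / x) - 1))
          * deriv (deriv (fun x : ℝ => x * ((2 : ℝ) ^ (β / x) - 1))) x ≤ 0) ∧
    AntitoneOn
      (fun x : ℝ => (x * ((2 : ℝ) ^ (β / x) - 1))
        / deriv (fun x : ℝ => x * ((2 : ℝ) ^ (β / x) - 1)) x)
      (Set.Ioi (0 : ℝ)) := by
  simp only [Real.rpow_def_of_pos (show (0:ℝ) < 2 by norm_num)]
  set F : ℝ → ℝ := fun x : ℝ => x * (Real.exp (Real.log 2 * (β / x)) - 1) with hF
  have hd1 : ∀ x : ℝ, x ≠ 0 → deriv F x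
      = Real.exp (Real.log 2 * (β / x)) - 1
        - Real.log 2 * (β / x) * Real.exp (Real.log 2 * (β / x)) :=
    fun x hx => (hasDerivAt_F2 β hx).deriv
  have hev : ∀ x : ℝ, x ≠ 0 → deriv F =ᶠ[nhds x]
      (fun x : ℝ => Real.exp (Real.log 2 * (β / x)) - 1
        - Real.log 2 * (β / x) * Real.exp (Real.log 2 * (β / x))) := by
    intro x hx
    filter_upwards [eventually_ne_nhds hx] with y hy
    exact (hasDerivAt_F2 β hy).deriv
  have hd2 : ∀ x : ℝ, x ≠ 0 → deriv (deriv F) x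
      = (Real.log 2 * β) ^ 2 / x ^ 3 * Real.exp (Real.log 2 * (β / x)) := by
    intro x hx
    rw [(hev x hx).deriv_eq]
    exact (hasDerivAt_G2 β hx).deriv
  have hu : ∀ x : ℝ, 0 < x → 0 < Real.log 2 * (β / x) :=
    fun x hx => mul_pos (Real.log_pos one_lt_two) (div_pos hβ hx)
  have part1 : ∀ x : ℝ, 0 < x →
      (deriv F x) ^ 2 - x * (Real.exp (Real.log 2 * (β / x)) - 1) * deriv (deriv F) x ≤ 0 := by
    intro x hx
    rw [hd1 x hx.ne', hd2 x hx.ne']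
    have hk := key_ineq2 (hu x hx)
    have e2 : x * (Real.exp (Real.log 2 * (β / x)) - 1)
        * ((Real.log 2 * β) ^ 2 / x ^ 3 * Real.exp (Real.log 2 * (β / x)))
        = (Real.log 2 * (β / x)) ^ 2 * Real.exp (Real.log 2 * (β / x))
          * (Real.exp (Real.log 2 * (β / x)) - 1) := by
      field_simp
    rw [e2]
    linarith
  have hneg : ∀ x : ℝ, 0 < x → deriv F x < 0 := by
    intro x hx
    rw [hd1 x hx.ne']
    set u := Real.log 2 * (β / x) with hudef
    have hu' := hu x hx
    have h := Real.add_one_lt_exp (show -u ≠ 0 by linarith)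
    rw [Real.exp_neg] at h
    have hA := Real.exp_pos u
    have h2 := mul_lt_mul_of_pos_right h hA
    rw [inv_mul_cancel₀ hA.ne'] at h2
    nlinarith
  have hq : ∀ x : ℝ, 0 < x → HasDerivAt (fun y : ℝ => F y / deriv F y)
      (((Real.exp (Real.log 2 * (β / x)) - 1
          - Real.log 2 * (β / x) * Real.exp (Real.log 2 * (β / x))) * deriv F x
        - F x * ((Real.log 2 * β) ^ 2 / x ^ 3 * Real.exp (Real.log 2 * (β / x))))
        / (deriv F x) ^ 2) x := by
    intro x hx
    have h1 := hasDerivAt_F2 β hx.ne'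
    have h2 : HasDerivAt (deriv F)
        ((Real.log 2 * β) ^ 2 / x ^ 3 * Real.exp (Real.log 2 * (β / x))) x :=
      (hasDerivAt_G2 β hx.ne').congr_of_eventuallyEq (hev x hx.ne')
    exact h1.div h2 (hneg x hx).ne
  refine ⟨part1, ?_⟩
  apply antitoneOn_of_deriv_nonpos (convex_Ioi 0)
  · intro x hx
    exact ((hq x hx).differentiableAt).continuousAt.continuousWithinAt
  · rw [interior_Ioi]
    intro x hx
    exact ((hq x hx).differentiableAt).differentiableWithinAt
  · rw [interior_Ioi]
    intro x hx
    rw [(hq x hx).deriv]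
    apply div_nonpos_of_nonpos_of_nonneg _ (sq_nonneg _)
    have h := part1 x hx
    rw [hd2 x hx.ne'] at h
    rw [← hd1 x hx.ne']
    have hFx : F x = x * (Real.exp (Real.log 2 * (β / x)) - 1) := rfl
    rw [hFx]
    nlinarith [h]
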